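/- Assume q ∈ L¹_loc([0,∞)) with q(x) ≥ 0 for a.e. x, lim_{k→∞} d_k = 0, and (1/d_k) ∫_{Δ_k} q(x) dx → ∞ as k → ∞. Then q satisfies Molchanov's condition: for every ε > 0, ∫_x^{x+ε} q(t) dt → ∞ as x → ∞. -/

import Mathlib

open MeasureTheory Set Filter

private lemma icc_add (q : ℝ → ℝ) (hq : ∀ a b : ℝ, 0 ≤ a → IntegrableOn q (Icc a b) volume)
    {a b c : ℝ} (ha : 0 ≤ a) (hab : a ≤ b) (hbc : b ≤ c) :
    (∫ t in Icc a c, q t) = (∫ t in Icc a b, q t) + ∫ t in Icc b c, q t := by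
  rw [integral_Icc_eq_integral_Ioc, integral_Icc_eq_integral_Ioc,
    integral_Icc_eq_integral_Ioc, ← Ioc_union_Ioc_eq_Ioc hab hbc]
  exact setIntegral_union (Ioc_disjoint_Ioc_of_le le_rfl) measurableSet_Ioc
    (((hq a b ha).mono_set Ioc_subset_Icc_self))
    (((hq b c (ha.trans hab)).mono_set Ioc_subset_Icc_self))

/-- **Corollary 3.6**: if `q ≥ 0` a.e., `d_k → 0` and `(1/d_k) ∫_Δₖ q → ∞`,
then `q` satisfies Molchanov's condition. -/
theorem stmt_14 (x : ℕ → ℝ) (hx0 : x 0 = 0) (hmono : StrictMono x)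
    (hxtop : Tendsto x atTop atTop)
    (q : ℝ → ℝ) (hq : ∀ a b : ℝ, 0 ≤ a → IntegrableOn q (Icc a b) volume)
    (hq0 : ∀ᵐ t ∂(volume.restrict (Ioi (0 : ℝ))), 0 ≤ q t)
    (hd0 : Tendsto (fun k => x (k + 1) - x k) atTop (nhds 0))
    (hmean : Tendsto (fun k =>
      (1 / (x (k + 1) - x k)) * ∫ t in Icc (x k) (x (k + 1)), q t) atTop atTop) :
    ∀ ε > 0, Tendsto (fun X : ℝ => ∫ t in Icc X (X + ε), q t) atTop atTop := by
  intro ε hε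
  rw [tendsto_atTop]
  intro C
  set c : ℝ := 2 * max C 1 / ε with hc
  have hc1 : (1:ℝ) ≤ max C 1 := le_max_right _ _
  have hcpos : 0 < c := by
    apply div_pos _ hε; linarith
  have h1 : ∀ᶠ k in atTop,
      c ≤ (1 / (x (k+1) - x k)) * ∫ t in Icc (x k) (x (k+1)), q t :=
    hmean.eventually_ge_atTop c
  have h2 : ∀ᶠ k in atTop, x (k+1) - x k < ε/4 :=
    hd0.eventually_lt_const (by linarith)
  obtain ⟨K, hK⟩ := eventually_atTop.mp (h1.and h2)
  -- per-interval lower bound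
  have hdk : ∀ k, 0 < x (k+1) - x k := fun k => sub_pos.mpr (hmono (Nat.lt_succ_self k))
  have Iq : ∀ k, K ≤ k → c * (x (k+1) - x k) ≤ ∫ t in Icc (x k) (x (k+1)), q t := by
    intro k hk
    have h := (hK k hk).1
    have hd := hdk k
    calc c * (x (k+1) - x k)
        ≤ ((1 / (x (k+1) - x k)) * ∫ t in Icc (x k) (x (k+1)), q t) * (x (k+1) - x k) := by
          exact mul_le_mul_of_nonneg_right h hd.le
      _ = ∫ t in Icc (x k) (x (k+1)), q t := by
          field_simp
  filter_upwards [eventually_ge_atTop (max (x K) 1)] with X hX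
  have hX1 : (1:ℝ) ≤ X := le_trans (le_max_right _ _) hX
  have hXK : x K ≤ X := le_trans (le_max_left _ _) hX
  -- choose m
  have hm : ∃ j, X < x j := ((hxtop.eventually_gt_atTop X).exists)
  set m := Nat.find hm with hmdef
  have hmX : X < x m := Nat.find_spec hm
  have hKm : K < m := by
    by_contra h
    push_neg at h
    exact absurd (lt_of_lt_of_le hmX (hmono.monotone h)) (not_lt.mpr hXK)
  have hm0 : m ≠ 0 := by omega
  have hm1 : x (m - 1) ≤ X := by
    have := Nat.find_min hm (Nat.pred_lt hm0)
    push_neg at this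
    exact this
  have hKm1 : K ≤ m - 1 := by omega
  have hxm : x m ≤ X + ε/4 := by
    have hd := (hK (m-1) hKm1).2
    have : x ((m-1)+1) ≤ x (m-1) + ε/4 := by linarith
    have hmm : m - 1 + 1 = m := by omega
    rw [hmm] at this
    linarith
  -- choose n
  have hn : ∃ j, X + 3*ε/4 < x j := ((hxtop.eventually_gt_atTop _).exists)
  set n := Nat.find hn with hndef
  have hnX : X + 3*ε/4 < x n := Nat.find_spec hn
  have hmn : m < n := by
    by_contra h
    push_neg at h
    have : x n ≤ x m := hmono.monotone h
    linarith
  have hn0 : n ≠ 0 := by omega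
  have hn1 : x (n - 1) ≤ X + 3*ε/4 := by
    have := Nat.find_min hn (Nat.pred_lt hn0)
    push_neg at this
    exact this
  have hKn1 : K ≤ n - 1 := by omega
  have hxn : x n ≤ X + ε := by
    have hd := (hK (n-1) hKn1).2
    have : x ((n-1)+1) ≤ x (n-1) + ε/4 := by linarith
    have hnn : n - 1 + 1 = n := by omega
    rw [hnn] at this
    linarith
  have hxm0 : (0:ℝ) < x m := lt_of_lt_of_le (by linarith) hmX.le
  -- telescoping lower bound
  have main : ∀ j, c * (x (m + j) - x m) ≤ ∫ t in Icc (x m) (x (m + j)), q t := by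
    intro j
    induction j with
    | zero =>
        simp only [Nat.add_zero, sub_self, mul_zero]
        rw [integral_Icc_eq_integral_Ioc, Ioc_self, setIntegral_empty]
    | succ j ih =>
        have hmj : x m ≤ x (m + j) := hmono.monotone (Nat.le_add_right m j)
        have hjj : x (m + j) ≤ x (m + j + 1) := (hmono (Nat.lt_succ_self _)).le
        have hIq : c * (x (m + j + 1) - x (m + j)) ≤ ∫ t in Icc (x (m+j)) (x (m+j+1)), q t :=
          Iq (m + j) (le_trans hKm.le (Nat.le_add_right m j))
        rw [show m + (j+1) = m + j + 1 from rfl,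
          icc_add q hq hxm0.le hmj hjj]
        have := add_le_add ih hIq
        linarith
  obtain ⟨j, hj⟩ : ∃ j, n = m + j := ⟨n - m, by omega⟩
  have key : c * (x n - x m) ≤ ∫ t in Icc (x m) (x n), q t := by rw [hj]; exact main j
  -- monotonicity
  have hsub : Icc (x m) (x n) ⊆ Icc X (X + ε) :=
    Icc_subset_Icc hmX.le hxn
  have hnonneg : 0 ≤ᵐ[volume.restrict (Icc X (X+ε))] q :=
    ae_restrict_of_ae_restrict_of_subset
      (fun t ht => lt_of_lt_of_le (by linarith) ht.1) hq0
  have hmonoI : (∫ t in Icc (x m) (x n), q t) ≤ ∫ t in Icc X (X+ε), q t :=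
    setIntegral_mono_set (hq X (X+ε) (by linarith)) hnonneg
      (HasSubset.Subset.eventuallyLE hsub)
  have hlen : ε/2 ≤ x n - x m := by linarith
  have : C ≤ c * (x n - x m) := by
    have : c * (ε/2) = max C 1 := by field_simp [hc]; rw [hc, div_mul_cancel₀ _ hε.ne']
    nlinarith [le_max_left C 1, mul_le_mul_of_nonneg_left hlen hcpos.le]
  linarith
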